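/- Let D be the unit disc and B the Bergman projection of L^2(D). There exists an absolute constant a > 0 such that for every f in L^2(D) supported in the closed disc of radius 1/2: integral_D |f - B(f)|^2 >= a * integral_D |f|^2. -/

import Mathlib

set_option maxHeartbeats 1000000

open MeasureTheory Metric

section CauchyEstimate

open Set intervalIntegral


lemma cont_circ {h : ℂ → ℂ} (hd : DifferentiableOn ℂ h (ball 0 1))
    {r : ℝ} (h0 : 0 ≤ r) (h1 : r < 1) : Continuous fun θ => h (circleMap 0 r θ) := by
  refine hd.continuousOn.comp_continuous (continuous_circleMap 0 r) fun θ => ?_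
  simpa [mem_ball_zero_iff, abs_of_nonneg h0] using h1

lemma cauchy_pt {h : ℂ → ℂ} (hd : DifferentiableOn ℂ h (ball 0 1))
    {r : ℝ} (hr : r ∈ Set.Ioo (3/4:ℝ) (7/8)) {z : ℂ} (hz : z ∈ closedBall (0:ℂ) (1/2)) :
    ‖h z‖ ≤ (2/Real.pi) * ∫ θ in (0:ℝ)..(2*Real.pi), ‖h (circleMap 0 r θ)‖ := by
  have hr0 : (0:ℝ) < r := by linarith [hr.1]
  rw [mem_closedBall_zero_iff] at hz
  have hzr : z ∈ ball (0:ℂ) r := by rw [mem_ball_zero_iff]; linarith [hr.1]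
  have hdc : DiffContOnCl ℂ h (ball (0:ℂ) r) := by
    refine ⟨hd.mono (ball_subset_ball (by linarith [hr.2])), ?_⟩
    refine hd.continuousOn.mono ?_
    rw [closure_ball (0:ℂ) hr0.ne']
    exact closedBall_subset_ball (by linarith [hr.2])
  have key := hdc.circleIntegral_sub_inv_smul hzr
  have hmc : Continuous fun θ => h (circleMap 0 r θ) :=
    cont_circ hd hr0.le (by linarith [hr.2])
  -- lower bound on |circleMap - z|
  have hlow : ∀ θ : ℝ, (1/4 : ℝ) ≤ ‖circleMap 0 r θ - z‖ := by
    intro θ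
    have h1 : ‖circleMap 0 r θ‖ = r := by
      simpa [abs_of_nonneg hr0.le] using abs_circleMap_zero r θ
    have := norm_sub_norm_le (circleMap 0 r θ) z
    linarith [hr.1, this, h1]
  have hne : ∀ θ : ℝ, circleMap 0 r θ - z ≠ 0 := by
    intro θ hz0
    have := hlow θ; rw [hz0] at this; norm_num at this
  -- norm of the circle integral
  have hb : ‖∮ w in C(0, r), (w - z)⁻¹ • h w‖
      ≤ ∫ θ in (0:ℝ)..(2*Real.pi), 4 * ‖h (circleMap 0 r θ)‖ := by
    unfold circleIntegral
    refine le_trans (intervalIntegral.norm_integral_le_integral_norm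
      (by positivity : (0:ℝ) ≤ 2 * Real.pi)) ?_
    refine intervalIntegral.integral_mono_on (by positivity) ?_ ?_ ?_
    · -- integrability of norms
      apply Continuous.intervalIntegrable
      have hci : Continuous fun θ => (circleMap 0 r θ - z)⁻¹ :=
        ((continuous_circleMap 0 r).sub continuous_const).inv₀ hne
      simp only [deriv_circleMap]
      exact (((continuous_circleMap 0 r).mul continuous_const).smul (hci.smul hmc)).norm
    · exact (continuous_const.mul hmc.norm).intervalIntegrable _ _
    · intro θ _
      rw [norm_smul, norm_smul, deriv_circleMap]
      have h1 : ‖circleMap 0 r θ * Complex.I‖ = r := by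
        simp [abs_of_nonneg hr0.le]
      rw [h1, norm_inv]
      have h2 : ‖circleMap 0 r θ - z‖⁻¹ ≤ 4 := by
        rw [inv_le_comm₀ (by linarith [hlow θ]) (by norm_num)]
        linarith [hlow θ]
      have h3 : (0:ℝ) ≤ ‖h (circleMap 0 r θ)‖ := norm_nonneg _
      nlinarith [mul_le_mul_of_nonneg_right h2 h3, hr.2,
        inv_nonneg.2 (norm_nonneg (circleMap 0 r θ - z))]
  rw [key] at hb
  rw [norm_smul] at hb
  have hpin : ‖(2 * (Real.pi:ℂ) * Complex.I)‖ = 2 * Real.pi := by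
    simp [abs_of_nonneg Real.pi_pos.le]
  rw [hpin] at hb
  rw [intervalIntegral.integral_const_mul] at hb
  have hpi := Real.pi_pos
  rw [div_mul_eq_mul_div, le_div_iff₀ hpi]
  linarith

noncomputable def annA : Set ℂ := ball (0:ℂ) (7/8) \ closedBall 0 (3/4)

lemma annA_meas : MeasurableSet annA :=
  measurableSet_ball.diff measurableSet_closedBall

lemma polar_symm_cont : Continuous fun p : ℝ × ℝ => Complex.polarCoord.symm p := by
  simp only [Complex.polarCoord_symm_apply]
  fun_prop

lemma target_inter :
    polarCoord.target ∩ (fun p : ℝ × ℝ => Complex.polarCoord.symm p) ⁻¹' annA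
      = Ioo (3/4:ℝ) (7/8) ×ˢ Ioo (-Real.pi) Real.pi := by
  ext p
  rw [show polarCoord.target = Ioi (0:ℝ) ×ˢ Ioo (-Real.pi) Real.pi from rfl]
  simp only [ mem_inter_iff, mem_prod, mem_Ioi, mem_Ioo, mem_preimage,
    annA, mem_diff, mem_ball_zero_iff, mem_closedBall_zero_iff,
    Complex.norm_polarCoord_symm, not_le]
  constructor
  · rintro ⟨⟨h1, h2⟩, h3, h4⟩
    rw [abs_of_pos h1] at h3 h4
    exact ⟨⟨h4, h3⟩, h2⟩
  · rintro ⟨⟨h1, h2⟩, h3⟩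
    have h0 : (0:ℝ) < p.1 := by linarith
    rw [abs_of_pos h0]
    exact ⟨⟨h0, h3⟩, h2, h1⟩

lemma polar_ann (F : ℂ → ℝ)
    (hint : IntegrableOn (fun p : ℝ × ℝ => p.1 • F (Complex.polarCoord.symm p))
      (Ioo (3/4:ℝ) (7/8) ×ˢ Ioo (-Real.pi) Real.pi) (volume.prod volume)) :
    ∫ z in annA, F z =
      ∫ r in Ioo (3/4:ℝ) (7/8), ∫ θ in Ioo (-Real.pi) Real.pi,
        r • F (Complex.polarCoord.symm (r, θ)) := by
  have h1 : ∫ z in annA, F z = ∫ z, annA.indicator F z := (MeasureTheory.integral_indicator annA_meas).symm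
  rw [h1, ← Complex.integral_comp_polarCoord_symm]
  have h2 : ∀ p : ℝ × ℝ, p.1 • annA.indicator F (Complex.polarCoord.symm p)
      = ((fun p : ℝ × ℝ => Complex.polarCoord.symm p) ⁻¹' annA).indicator
          (fun p : ℝ × ℝ => p.1 • F (Complex.polarCoord.symm p)) p := by
    intro p
    by_cases hp : Complex.polarCoord.symm p ∈ annA
    · rw [Set.indicator_of_mem hp, Set.indicator_of_mem (Set.mem_preimage.mpr hp)]
    · rw [Set.indicator_of_notMem hp, Set.indicator_of_notMem
        (fun hc => hp (Set.mem_preimage.mp hc)), smul_zero]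
  simp_rw [h2]
  rw [setIntegral_indicator (annA_meas.preimage polar_symm_cont.measurable), target_inter,
    Measure.volume_eq_prod, setIntegral_prod _ hint]

lemma polar_ann_integrable (F : ℂ → ℝ)
    (hint : IntegrableOn (fun p : ℝ × ℝ => p.1 • F (Complex.polarCoord.symm p))
      (Ioo (3/4:ℝ) (7/8) ×ˢ Ioo (-Real.pi) Real.pi) (volume.prod volume)) :
    IntegrableOn (fun r => ∫ θ in Ioo (-Real.pi) Real.pi,
        r • F (Complex.polarCoord.symm (r, θ))) (Ioo (3/4:ℝ) (7/8)) volume := by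
  rw [IntegrableOn] at hint ⊢
  rw [← Measure.prod_restrict] at hint
  exact hint.integral_prod_left

lemma symm_eq_circleMap (r θ : ℝ) :
    Complex.polarCoord.symm (r, θ) = circleMap 0 r θ := by
  rw [Complex.polarCoord_symm_apply, circleMap, Complex.exp_mul_I]
  push_cast
  ring

lemma inner_int (F : ℂ → ℝ) (r : ℝ) :
    ∫ θ in Ioo (-Real.pi) Real.pi, r • F (Complex.polarCoord.symm (r, θ))
      = r * ∫ θ in (0:ℝ)..(2*Real.pi), F (circleMap 0 r θ) := by
  simp_rw [symm_eq_circleMap, smul_eq_mul]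
  rw [MeasureTheory.integral_const_mul]
  congr 1
  rw [← integral_Ioc_eq_integral_Ioo,
    ← intervalIntegral.integral_of_le (by linarith [Real.pi_pos] : -Real.pi ≤ Real.pi)]
  have h := ((periodic_circleMap 0 r).comp F).intervalIntegral_add_eq (-Real.pi) 0
  have e : -Real.pi + 2 * Real.pi = Real.pi := by ring
  rw [e, zero_add] at h
  exact h

lemma prod_integrable {h : ℂ → ℂ} (hd : DifferentiableOn ℂ h (ball 0 1)) :
    IntegrableOn (fun p : ℝ × ℝ => p.1 • ‖h (Complex.polarCoord.symm p)‖)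
      (Ioo (3/4:ℝ) (7/8) ×ˢ Ioo (-Real.pi) Real.pi) (volume.prod volume) := by
  rw [← Measure.volume_eq_prod]
  have hK : IsCompact (Icc (3/4:ℝ) (7/8) ×ˢ Icc (-Real.pi) Real.pi) :=
    isCompact_Icc.prod isCompact_Icc
  have hmap : MapsTo (fun p : ℝ × ℝ => Complex.polarCoord.symm p)
      (Icc (3/4:ℝ) (7/8) ×ˢ Icc (-Real.pi) Real.pi) (ball (0:ℂ) 1) := by
    rintro ⟨r, θ⟩ ⟨hr, _⟩
    rw [mem_ball_zero_iff, Complex.norm_polarCoord_symm]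
    simp only [mem_Icc] at hr
    rw [abs_of_nonneg (by linarith [hr.1])]
    linarith [hr.2]
  have hcont : ContinuousOn (fun p : ℝ × ℝ => p.1 • ‖h (Complex.polarCoord.symm p)‖)
      (Icc (3/4:ℝ) (7/8) ×ˢ Icc (-Real.pi) Real.pi) :=
    (continuous_fst.continuousOn).smul
      ((hd.continuousOn.comp polar_symm_cont.continuousOn hmap).norm)
  exact (hcont.integrableOn_compact hK).mono_set
    (prod_mono Ioo_subset_Icc_self Ioo_subset_Icc_self)

lemma key_pointwise {h : ℂ → ℂ} (hd : DifferentiableOn ℂ h (ball 0 1))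
    {z : ℂ} (hz : z ∈ closedBall (0:ℂ) (1/2)) :
    3 * Real.pi / 64 * ‖h z‖ ≤ ∫ w in annA, ‖h w‖ := by
  have hpi := Real.pi_pos
  have hint := prod_integrable hd
  rw [polar_ann (fun w => ‖h w‖) hint]
  have hlow : ∀ r ∈ Ioo (3/4:ℝ) (7/8),
      3 * Real.pi / 8 * ‖h z‖ ≤ ∫ θ in Ioo (-Real.pi) Real.pi,
        r • ‖h (Complex.polarCoord.symm (r, θ))‖ := by
    intro r hr
    rw [inner_int (fun w => ‖h w‖) r]
    have hc := cauchy_pt hd hr hz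
    have hI : (0:ℝ) ≤ ∫ θ in (0:ℝ)..(2*Real.pi), ‖h (circleMap 0 r θ)‖ :=
      intervalIntegral.integral_nonneg (by positivity) (fun θ _ => norm_nonneg _)
    have h34 : (3/4:ℝ) ≤ r := hr.1.le
    calc 3 * Real.pi / 8 * ‖h z‖
        ≤ (3/4) * ∫ θ in (0:ℝ)..(2*Real.pi), ‖h (circleMap 0 r θ)‖ := by
          rw [div_mul_eq_mul_div] at hc
          have hc' := (le_div_iff₀ hpi).mp hc
          nlinarith [hc', hI]
      _ ≤ r * ∫ θ in (0:ℝ)..(2*Real.pi), ‖h (circleMap 0 r θ)‖ :=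
          mul_le_mul_of_nonneg_right h34 hI
  have hJint := polar_ann_integrable (fun w => ‖h w‖) hint
  have := setIntegral_ge_of_const_le_real (c := 3 * Real.pi / 8 * ‖h z‖)
    measurableSet_Ioo (by rw [Real.volume_Ioo]; exact ENNReal.ofReal_ne_top) hlow hJint
  rw [measureReal_def, Real.volume_Ioo] at this
  have hv : (ENNReal.ofReal (7/8 - 3/4)).toReal = 1/8 := by
    rw [ENNReal.toReal_ofReal (by norm_num)]; norm_num
  rw [hv] at this
  linarith

lemma annA_sub_ball : annA ⊆ ball (0:ℂ) 1 :=
  fun z hz => ball_subset_ball (by norm_num) hz.1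

lemma annA_sub_cb : annA ⊆ closedBall (0:ℂ) (7/8) :=
  fun z hz => ball_subset_closedBall hz.1

lemma vol_annA_le : (volume annA).toReal ≤ Real.pi := by
  have h2 : volume (ball (0:ℂ) 1) = NNReal.pi := by
    rw [Complex.volume_ball]; simp
  have h1 : volume annA ≤ volume (ball (0:ℂ) 1) := measure_mono annA_sub_ball
  calc (volume annA).toReal ≤ (volume (ball (0:ℂ) 1)).toReal :=
        ENNReal.toReal_mono (by rw [h2]; exact ENNReal.coe_ne_top) h1
    _ = Real.pi := by rw [h2]; simp

lemma holder_annA {h : ℂ → ℂ} (hd : DifferentiableOn ℂ h (ball 0 1)) :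
    ∫ w in annA, ‖h w‖
      ≤ Real.sqrt Real.pi * Real.sqrt (∫ w in annA, ‖h w‖^2) := by
  have hmeas : AEStronglyMeasurable (fun w => ‖h w‖) (volume.restrict annA) :=
    ((hd.continuousOn.mono annA_sub_ball).norm).aestronglyMeasurable annA_meas
  haveI : IsFiniteMeasure (volume.restrict annA) := by
    constructor
    rw [Measure.restrict_apply_univ]
    exact ((measure_mono annA_sub_ball).trans_lt measure_ball_lt_top)
  obtain ⟨C, hC⟩ := (isCompact_closedBall (0:ℂ) (7/8)).exists_bound_of_continuousOn
    (hd.continuousOn.mono (closedBall_subset_ball (by norm_num)))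
  have hmem2 : MemLp (fun w => ‖h w‖) (ENNReal.ofReal 2) (volume.restrict annA) :=
    MemLp.of_bound hmeas C ((ae_restrict_iff' annA_meas).2 (.of_forall fun x hx => by
      rw [norm_norm]; exact hC x (annA_sub_cb hx)))
  have h1 : MemLp (fun _ : ℂ => (1:ℝ)) (ENNReal.ofReal 2) (volume.restrict annA) :=
    memLp_const 1
  have hpq : Real.HolderConjugate 2 2 := Real.HolderConjugate.two_two
  have hH := integral_mul_le_Lp_mul_Lq_of_nonneg hpq
    (μ := volume.restrict annA) (f := fun w => ‖h w‖) (g := fun _ => 1)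
    (.of_forall fun _ => norm_nonneg _) (.of_forall fun _ => zero_le_one) hmem2 h1
  simp only [mul_one, Real.one_rpow, Real.rpow_two, MeasureTheory.integral_const, smul_eq_mul,
    Measure.restrict_apply_univ] at hH
  rw [← Real.sqrt_eq_rpow, ← Real.sqrt_eq_rpow] at hH
  refine hH.trans ?_
  rw [mul_comm]
  have := vol_annA_le
  gcongr
  simpa [measureReal_def] using this

lemma key_int {h : ℂ → ℂ} (hd : DifferentiableOn ℂ h (ball 0 1))
    (hint2 : IntegrableOn (fun z => ‖h z‖^2) (ball 0 1) volume) :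
    ∫ z in ball (0:ℂ) 1, ‖h z‖^2
      ≤ 121 * ∫ z in ball (0:ℂ) 1 \ closedBall 0 (1/2), ‖h z‖^2 := by
  have hpi := Real.pi_pos
  set T := ∫ z in ball (0:ℂ) 1 \ closedBall 0 (1/2), ‖h z‖^2 with hTdef
  have hintD : IntegrableOn (fun z => ‖h z‖^2) (ball (0:ℂ) 1 \ closedBall 0 (1/2)) volume :=
    hint2.mono_set diff_subset
  have hT0 : 0 ≤ T :=
    setIntegral_nonneg (measurableSet_ball.diff measurableSet_closedBall)
      (fun x _ => sq_nonneg _)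
  have hTsub : ∫ w in annA, ‖h w‖^2 ≤ T := by
    refine setIntegral_mono_set hintD
      (Filter.Eventually.of_forall fun x => sq_nonneg _) (HasSubset.Subset.eventuallyLE ?_)
    intro z hz
    rcases hz with ⟨hz1, hz2⟩
    rw [mem_ball_zero_iff] at hz1
    rw [mem_closedBall_zero_iff] at hz2
    push_neg at hz2
    exact ⟨mem_ball_zero_iff.mpr (by linarith), fun hc => by
      rw [mem_closedBall_zero_iff] at hc; linarith⟩
  have hpt : ∀ z ∈ closedBall (0:ℂ) (1/2), ‖h z‖^2 ≤ 4096 / (9*Real.pi) * T := by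
    intro z hz
    have k1 := key_pointwise hd hz
    have k2 := holder_annA hd
    have k3 : Real.sqrt (∫ w in annA, ‖h w‖^2) ≤ Real.sqrt T := Real.sqrt_le_sqrt hTsub
    have k4 : ‖h z‖ ≤ 64 / (3*Real.pi) * (Real.sqrt Real.pi * Real.sqrt T) := by
      have hA0 : (0:ℝ) ≤ Real.sqrt Real.pi := Real.sqrt_nonneg _
      have := k1.trans (k2.trans (mul_le_mul_of_nonneg_left k3 (Real.sqrt_nonneg _)))
      rw [div_mul_eq_mul_div, le_div_iff₀ (by positivity : (0:ℝ) < 3*Real.pi)]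
      calc ‖h z‖ * (3*Real.pi) = (3 * Real.pi / 64 * ‖h z‖) * 64 := by ring
        _ ≤ (Real.sqrt Real.pi * Real.sqrt T) * 64 := by gcongr
        _ = 64 * (Real.sqrt Real.pi * Real.sqrt T) := by ring
    have k5 : ‖h z‖^2 ≤ (64 / (3*Real.pi) * (Real.sqrt Real.pi * Real.sqrt T))^2 :=
      pow_le_pow_left₀ (norm_nonneg _) k4 2
    refine k5.trans (le_of_eq ?_)
    rw [mul_pow, mul_pow, Real.sq_sqrt hpi.le, Real.sq_sqrt hT0]
    field_simp
    ring
  have hKvol : (volume (closedBall (0:ℂ) (1/2))).toReal = Real.pi / 4 := by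
    rw [Complex.volume_closedBall]
    rw [ENNReal.toReal_mul, ENNReal.toReal_pow, ENNReal.toReal_ofReal (by norm_num),
      ENNReal.coe_toReal, NNReal.coe_real_pi]
    norm_num
    ring
  have hK : ∫ z in closedBall (0:ℂ) (1/2), ‖h z‖^2 ≤ 1024/9 * T := by
    have hb := norm_setIntegral_le_of_norm_le_const (μ := volume)
      (f := fun z => ‖h z‖^2) (C := 4096 / (9*Real.pi) * T)
      (measure_closedBall_lt_top)
      (fun x hx => by rw [Real.norm_eq_abs, abs_of_nonneg (sq_nonneg _)]; exact hpt x hx)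
    rw [measureReal_def, hKvol] at hb
    have : ∫ z in closedBall (0:ℂ) (1/2), ‖h z‖^2
        ≤ 4096 / (9*Real.pi) * T * (Real.pi/4) :=
      (le_abs_self _).trans (by rw [← Real.norm_eq_abs]; exact hb)
    refine this.trans (le_of_eq ?_)
    field_simp
    ring
  have hsplit : ∫ z in ball (0:ℂ) 1, ‖h z‖^2
      = (∫ z in closedBall (0:ℂ) (1/2), ‖h z‖^2) + T := by
    rw [hTdef, ← integral_inter_add_diff measurableSet_closedBall hint2,
      Set.inter_eq_right.mpr (closedBall_subset_ball (by norm_num : (1:ℝ)/2 < 1))]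
  rw [hsplit]
  linarith

end CauchyEstimate

lemma norm_sq_Lp {α : Type*} [MeasurableSpace α] {μ : Measure α} (u : Lp ℂ 2 μ) :
    ‖u‖^2 = ∫ a, ‖u a‖^2 ∂μ := by
  have h1 : (‖u‖:ℝ)^2 = RCLike.re (inner (𝕜 := ℂ) u u) := (inner_self_eq_norm_sq u).symm
  rw [h1, MeasureTheory.L2.inner_def, ← integral_re (MeasureTheory.L2.integrable_inner u u)]
  exact integral_congr_ae (.of_forall fun a => inner_self_eq_norm_sq (𝕜 := ℂ) (u a))

lemma integrable_norm_sq_Lp {α : Type*} [MeasurableSpace α] {μ : Measure α} (u : Lp ℂ 2 μ) :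
    Integrable (fun a => ‖u a‖^2) μ := by
  have h1 : Integrable (fun a => RCLike.re (inner (𝕜 := ℂ) (u a) (u a))) μ :=
    (MeasureTheory.L2.integrable_inner u u).re
  exact h1.congr (.of_forall fun a => congrArg _ rfl) |>.congr
    (.of_forall fun a => inner_self_eq_norm_sq (𝕜 := ℂ) (u a))

/-- Lebesgue measure restricted to the unit disc. -/
noncomputable def muD : Measure ℂ := volume.restrict (ball 0 1)

/-- The subspace of `L²(D)` of (classes of) holomorphic functions. -/
noncomputable def bergmanSubspace : Submodule ℂ (Lp ℂ 2 muD) where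
  carrier := {f | ∃ g : ℂ → ℂ, DifferentiableOn ℂ g (ball 0 1) ∧ ∀ᵐ ζ ∂muD, f ζ = g ζ}
  add_mem' := by
    rintro a b ⟨g₁, hg₁, e₁⟩ ⟨g₂, hg₂, e₂⟩
    refine ⟨g₁ + g₂, hg₁.add hg₂, ?_⟩
    filter_upwards [Lp.coeFn_add a b, e₁, e₂] with ζ h h₁ h₂
    rw [h, Pi.add_apply, h₁, h₂]
    rfl
  zero_mem' := by
    refine ⟨0, differentiableOn_const 0, ?_⟩
    filter_upwards [Lp.coeFn_zero ℂ 2 muD] with ζ h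
    rw [h]
  smul_mem' := by
    rintro c a ⟨g, hg, e⟩
    refine ⟨c • g, hg.const_smul c, ?_⟩
    filter_upwards [Lp.coeFn_smul c a, e] with ζ h h₁
    rw [h, Pi.smul_apply, h₁]
    rfl

instance : CompleteSpace (bergmanSubspace.topologicalClosure : Submodule ℂ (Lp ℂ 2 muD)) :=
  IsClosed.completeSpace_coe (hs := Submodule.isClosed_topologicalClosure _)

/-- The Bergman projection: the orthogonal projection of `L²(D)` onto the (closed)
subspace of holomorphic functions. -/
noncomputable def bergmanProjection : Lp ℂ 2 muD →L[ℂ] bergmanSubspace.topologicalClosure :=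
  Submodule.orthogonalProjectionOnto bergmanSubspace.topologicalClosure

/-- There is an absolute constant `a > 0` such that every `f ∈ L²(D)` supported in the
closed disc of radius `1/2` satisfies `∫_D |f - B f|² ≥ a ∫_D |f|²`, where `B` is the
Bergman projection. -/
theorem bergman_projection_defect :
    ∃ a : ℝ, 0 < a ∧ ∀ f : Lp ℂ 2 muD,
      (∀ᵐ ζ ∂muD, ζ ∉ closedBall (0 : ℂ) (1 / 2) → f ζ = 0) →
      a * ‖f‖ ^ 2 ≤ ‖f - (bergmanProjection f : Lp ℂ 2 muD)‖ ^ 2 := by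
  refine ⟨1/144, by norm_num, fun f hf => ?_⟩
  set g₀ : Lp ℂ 2 muD := (bergmanProjection f : Lp ℂ 2 muD) with hg₀
  have hg₀mem : g₀ ∈ closure (bergmanSubspace : Set (Lp ℂ 2 muD)) := by
    rw [← Submodule.topologicalClosure_coe]
    exact (bergmanProjection f).2
  have main : ‖f‖ ≤ 12 * ‖f - g₀‖ := by
    refine le_of_forall_pos_le_add fun ε hε => ?_
    obtain ⟨g, hgmem, hdist⟩ := Metric.mem_closure_iff.mp hg₀mem (ε/12) (by positivity)
    obtain ⟨h, hdh, hae⟩ := hgmem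
    have hInt : Integrable (fun a => ‖g a‖^2) muD := integrable_norm_sq_Lp g
    have haeg : ∀ᵐ ζ ∂muD, ‖g ζ‖^2 = ‖h ζ‖^2 := hae.mono fun ζ hζ => by rw [hζ]
    have hIntH : IntegrableOn (fun z => ‖h z‖^2) (ball (0:ℂ) 1) volume := by
      have h2 := hInt.congr haeg
      rw [muD] at h2
      exact h2
    have hnormg : ‖g‖^2 = ∫ z in ball (0:ℂ) 1, ‖h z‖^2 := by
      rw [norm_sq_Lp g, integral_congr_ae haeg, muD]
    have hkey := key_int hdh hIntH
    set s : Set ℂ := ball (0:ℂ) 1 \ closedBall 0 (1/2) with hs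
    have hsmeas : MeasurableSet s := measurableSet_ball.diff measurableSet_closedBall
    have hrestrict : muD.restrict s = volume.restrict s := by
      rw [muD, Measure.restrict_restrict hsmeas,
        Set.inter_eq_self_of_subset_left Set.diff_subset]
    have hann : ∫ z in s, ‖h z‖^2 ∂volume = ∫ ζ in s, ‖(f - g) ζ‖^2 ∂muD := by
      rw [← hrestrict]
      refine integral_congr_ae ?_
      have h1 : ∀ᵐ ζ ∂(muD.restrict s), g ζ = h ζ := ae_restrict_of_ae hae
      have h2 : ∀ᵐ ζ ∂(muD.restrict s), (f - g) ζ = f ζ - g ζ :=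
        ae_restrict_of_ae (Lp.coeFn_sub f g)
      have h3 : ∀ᵐ ζ ∂(muD.restrict s), ζ ∉ closedBall (0:ℂ) (1/2) → f ζ = 0 :=
        ae_restrict_of_ae hf
      have h4 : ∀ᵐ ζ ∂(muD.restrict s), ζ ∈ s := ae_restrict_mem hsmeas
      filter_upwards [h1, h2, h3, h4] with ζ e1 e2 e3 e4
      rw [e2, e3 e4.2, e1, zero_sub, norm_neg]
    have hle : ∫ ζ in s, ‖(f - g) ζ‖^2 ∂muD ≤ ‖f - g‖^2 := by
      rw [norm_sq_Lp (f - g)]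
      exact setIntegral_le_integral (integrable_norm_sq_Lp (f - g))
        (.of_forall fun a => sq_nonneg _)
    have hgb : ‖g‖^2 ≤ 121 * ‖f - g‖^2 := by
      rw [hnormg]
      refine hkey.trans ?_
      rw [hann]
      nlinarith [hle]
    have hg11 : ‖g‖ ≤ 11 * ‖f - g‖ := by
      have h121 : ‖g‖^2 ≤ (11 * ‖f - g‖)^2 := by rw [mul_pow]; nlinarith [hgb]
      have := Real.sqrt_le_sqrt h121
      rwa [Real.sqrt_sq (norm_nonneg _), Real.sqrt_sq (by positivity)] at this
    have d1 : ‖g₀ - g‖ < ε/12 := by rw [← dist_eq_norm]; exact hdist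
    have t1 : ‖f - g‖ ≤ ‖f - g₀‖ + ‖g₀ - g‖ := by
      have he : f - g = (f - g₀) + (g₀ - g) := by abel
      rw [he]; exact norm_add_le _ _
    have t2 : ‖f‖ ≤ ‖f - g‖ + ‖g‖ := by
      have he : f = (f - g) + g := by abel
      calc ‖f‖ = ‖(f - g) + g‖ := by rw [← he]
        _ ≤ ‖f - g‖ + ‖g‖ := norm_add_le _ _
    calc ‖f‖ ≤ ‖f - g‖ + ‖g‖ := t2
      _ ≤ ‖f - g‖ + 11 * ‖f - g‖ := by linarith [hg11]
      _ = 12 * ‖f - g‖ := by ring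
      _ ≤ 12 * (‖f - g₀‖ + ε/12) := by nlinarith [t1, d1]
      _ = 12 * ‖f - g₀‖ + ε := by ring
  have hsq := pow_le_pow_left₀ (norm_nonneg f) main 2
  rw [mul_pow] at hsq
  nlinarith [hsq, sq_nonneg ‖f - g₀‖]
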